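/- arXiv:1603.03361 — 2 statements merged into one kernel-verified Lean document; each statement's English description precedes it below -/
import Mathlib

section
/- If X ⊆ [ℕ]^∞ is κ-unbounded for κ ∈ {cf(𝔡), 𝔡}, and A ⊆ X is a κ-unbounded subset of cardinality κ, D ⊆ [ℕ]^∞ is a dominating set of cardinality 𝔡 partitioned as D = ⋃_{a∈A} I_a with |⋃_{a∈B} I_a| < 𝔡 for every B ⊆ A of cardinality < κ, and for each a ∈ A and d ∈ I_a a function d' ∈ [ℕ]^∞ is chosen with a ≤ d' and d ≤ d', then the set {a ⊎ d' : a ∈ A, d ∈ I_a} is a 𝔡-unbounded subset of [ℕ]^∞. -/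
open Set Cardinal Filter

/-- The increasing enumeration of a set of naturals (meaningful when the set is infinite). -/
noncomputable def enum (a : Set ℕ) : ℕ → ℕ := Nat.nth (· ∈ a)

/-- `a ⊎ b = {2k : k ∈ a} ∪ {2k+1 : k ∈ b}`. -/
def usum (a b : Set ℕ) : Set ℕ := (fun k => 2 * k) '' a ∪ (fun k => 2 * k + 1) '' b

/-- A dominating family of functions. -/
def IsDominating (D : Set (ℕ → ℕ)) : Prop :=
  ∀ a : ℕ → ℕ, ∃ d ∈ D, ∀ᶠ n in Filter.atTop, a n ≤ d n

/-- The dominating number 𝔡. -/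
noncomputable def dNum : Cardinal := sInf { c | ∃ D, IsDominating D ∧ c = #D }

attribute [local instance] Classical.propDecidable

lemma setOf_mem (a : Set ℕ) : {k | k ∈ a} = a := rfl

lemma usum_infinite {a : Set ℕ} (x : Set ℕ) (ha : a.Infinite) : (usum a x).Infinite :=
  (ha.image (fun k _ m _ h => by omega)).mono subset_union_left

lemma odd_mem_usum {a x : Set ℕ} {k : ℕ} : 2 * k + 1 ∈ usum a x ↔ k ∈ x := by
  constructor
  · rintro (⟨m, _, h⟩ | ⟨m, hm, h⟩) <;> dsimp only at h
    · omega
    · obtain rfl : m = k := by omega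
      exact hm
  · intro h; exact Or.inr ⟨k, h, rfl⟩

lemma even_mem_usum {a x : Set ℕ} {k : ℕ} : 2 * k ∈ usum a x ↔ k ∈ a := by
  constructor
  · rintro (⟨m, hm, h⟩ | ⟨m, _, h⟩) <;> dsimp only at h
    · obtain rfl : m = k := by omega
      exact hm
    · omega
  · intro h; exact Or.inl ⟨k, h, rfl⟩

lemma usum_right {a x c z : Set ℕ} (h : usum a x = usum c z) : x = z := by
  ext k
  rw [← odd_mem_usum (a := a), h, odd_mem_usum]

lemma nth_range {g : ℕ → ℕ} (hg : StrictMono g) (n : ℕ) :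
    Nat.nth (· ∈ Set.range g) n = g n := by
  have hmem : (fun k => k ∈ Set.range g) (g n) := ⟨n, rfl⟩
  have hcount : Nat.count (· ∈ Set.range g) (g n) = n := by
    rw [Nat.count_eq_card_filter_range]
    have : ({x ∈ Finset.range (g n) | x ∈ Set.range g} : Finset ℕ)
        = (Finset.range n).image g := by
      ext k
      simp only [Finset.mem_filter, Finset.mem_range, Finset.mem_image, Set.mem_range]
      constructor
      · rintro ⟨hk, m, rfl⟩
        exact ⟨m, hg.lt_iff_lt.1 hk, rfl⟩
      · rintro ⟨m, hm, rfl⟩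
        exact ⟨hg hm, m, rfl⟩
    rw [this, Finset.card_image_of_injective _ hg.injective, Finset.card_range]
  calc Nat.nth (· ∈ Set.range g) n = Nat.nth (· ∈ Set.range g) (Nat.count (· ∈ Set.range g) (g n)) := by rw [hcount]
    _ = g n := Nat.nth_count hmem

lemma key_lemma {a x : Set ℕ} (ha : a.Infinite) (hx : x.Infinite) (hax : ∀ n, enum a n ≤ enum x n) (n : ℕ) :
    2 * enum a n ≤ enum (usum a x) (2 * n) := by
  set y := usum a x with hy
  have hyinf : y.Infinite := usum_infinite x ha
  set t := enum a n with ht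
  have hta : t ∈ a := Nat.nth_mem_of_infinite ha n
  have hty : 2 * t ∈ y := even_mem_usum.2 hta
  have hcount : Nat.count (· ∈ y) (2 * t) ≤ 2 * n := by
    rw [Nat.count_eq_card_filter_range]
    have hsub : ({k ∈ Finset.range (2 * t) | k ∈ y} : Finset ℕ) ⊆
        ((Finset.range t).filter (· ∈ a)).image (fun k => 2 * k) ∪
        ((Finset.range t).filter (· ∈ x)).image (fun k => 2 * k + 1) := by
      intro k hk
      simp only [Finset.mem_filter, Finset.mem_range] at hk
      obtain ⟨hk2t, hmem⟩ := hk
      rcases hmem with ⟨m, hm, rfl⟩ | ⟨m, hm, rfl⟩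
      · dsimp only at hk2t
        exact Finset.mem_union_left _ (Finset.mem_image.2 ⟨m, Finset.mem_filter.2
          ⟨Finset.mem_range.2 (by omega), hm⟩, rfl⟩)
      · dsimp only at hk2t
        exact Finset.mem_union_right _ (Finset.mem_image.2 ⟨m, Finset.mem_filter.2
          ⟨Finset.mem_range.2 (by omega), hm⟩, rfl⟩)
    have hca : ((Finset.range t).filter (· ∈ a)).card = n := by
      have := Nat.count_nth_of_infinite (p := (· ∈ a)) ha n
      rwa [Nat.count_eq_card_filter_range] at this
    have hcx : ((Finset.range t).filter (· ∈ x)).card ≤ n := by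
      have h1 : Nat.count (· ∈ x) t ≤ Nat.count (· ∈ x) (enum x n) :=
        Nat.count_monotone _ (hax n)
      have h2 : Nat.count (· ∈ x) (enum x n) = n := Nat.count_nth_of_infinite (p := (· ∈ x)) hx n
      calc ((Finset.range t).filter (· ∈ x)).card
          = Nat.count (· ∈ x) t := (Nat.count_eq_card_filter_range _ _).symm
        _ ≤ n := by rw [← h2]; exact h1
    calc ({k ∈ Finset.range (2 * t) | k ∈ y} : Finset ℕ).card
        ≤ _ := Finset.card_le_card hsub
      _ ≤ _ + _ := Finset.card_union_le _ _
      _ ≤ n + n := by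
          gcongr
          · exact le_of_eq ((Finset.card_image_of_injective _ (fun p q h => by omega)).trans hca)
          · exact (Finset.card_image_of_injective _ (fun p q h => by omega)).le.trans hcx
      _ = 2 * n := by omega
  have h1 : Nat.nth (· ∈ y) (Nat.count (· ∈ y) (2 * t)) = 2 * t := Nat.nth_count hty
  have h2 : Nat.nth (· ∈ y) (Nat.count (· ∈ y) (2 * t)) ≤ Nat.nth (· ∈ y) (2 * n) :=
    (Nat.nth_le_nth hyinf).2 hcount
  rw [h1] at h2
  exact h2
lemma isDominating_univ : IsDominating Set.univ :=
  fun a => ⟨a, Set.mem_univ _, Filter.Eventually.of_forall fun _ => le_rfl⟩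

lemma aleph0_le_dNum : ℵ₀ ≤ dNum := by
  refine le_csInf ⟨_, Set.univ, isDominating_univ, rfl⟩ ?_
  rintro c ⟨T, hT, rfl⟩
  rw [← Cardinal.infinite_iff, Set.infinite_coe_iff]
  intro hfin
  obtain ⟨d, hdT, hev⟩ := hT (fun n => (hfin.toFinset.sup fun d => d n) + 1)
  obtain ⟨n, hn⟩ := hev.exists
  have h2 : d n ≤ hfin.toFinset.sup fun d => d n :=
    Finset.le_sup (f := fun d => d n) (hfin.mem_toFinset.2 hdT)
  exact Nat.not_succ_le_self _ (hn.trans h2)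

theorem stmt6 (κ : Cardinal) (hκ : κ = (Cardinal.ord dNum).cof ∨ κ = dNum)
    (A : Set (Set ℕ)) (hA : ∀ a ∈ A, a.Infinite) (hAcard : #A = κ)
    (hAunb : ∀ Y ⊆ A, (∃ b : Set ℕ, b.Infinite ∧ ∀ y ∈ Y, ∀ n, enum y n ≤ enum b n) → #Y < κ)
    (D : Set (Set ℕ)) (hD : ∀ d ∈ D, d.Infinite) (hDcard : #D = dNum)
    (hDdom : ∀ g : ℕ → ℕ, ∃ d ∈ D, ∀ᶠ n in Filter.atTop, g n ≤ enum d n)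
    (I : Set ℕ → Set (Set ℕ)) (hIcover : D = ⋃ a ∈ A, I a)
    (hIsmall : ∀ B ⊆ A, #B < κ → #(⋃ a ∈ B, I a) < dNum)
    (f : Set ℕ → Set ℕ → Set ℕ)
    (hf : ∀ a ∈ A, ∀ d ∈ I a, (f a d).Infinite ∧ (∀ n, enum a n ≤ enum (f a d) n) ∧
      (∀ n, enum d n ≤ enum (f a d) n)) :
    (∀ s ∈ {s : Set ℕ | ∃ a ∈ A, ∃ d ∈ I a, s = usum a (f a d)}, s.Infinite) ∧
    dNum ≤ #{s : Set ℕ | ∃ a ∈ A, ∃ d ∈ I a, s = usum a (f a d)} ∧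
    ∀ Y ⊆ {s : Set ℕ | ∃ a ∈ A, ∃ d ∈ I a, s = usum a (f a d)},
      (∃ b : Set ℕ, b.Infinite ∧ ∀ y ∈ Y, ∀ n, enum y n ≤ enum b n) → #Y < dNum := by
  have hκd : κ ≤ dNum := by
    rcases hκ with h | h
    · rw [h]; exact Ordinal.cof_ord_le dNum
    · exact h.le
  set S := {s : Set ℕ | ∃ a ∈ A, ∃ d ∈ I a, s = usum a (f a d)} with hS
  refine ⟨?_, ?_, ?_⟩
  · rintro s ⟨a, haA, d, hdI, rfl⟩
    exact usum_infinite _ (hA a haA)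
  · -- dNum ≤ #S
    set T : Set (ℕ → ℕ) := {h | ∃ a ∈ A, ∃ d ∈ I a, h = enum (f a d)} with hT
    have hTdom : IsDominating T := by
      intro g
      obtain ⟨d, hdD, hev⟩ := hDdom g
      rw [hIcover] at hdD
      simp only [Set.mem_iUnion] at hdD
      obtain ⟨a, haA, hdI⟩ := hdD
      exact ⟨enum (f a d), ⟨a, haA, d, hdI, rfl⟩,
        hev.mono fun n hn => hn.trans ((hf a haA d hdI).2.2 n)⟩
    have h1 : dNum ≤ #T := csInf_le' ⟨T, hTdom, rfl⟩
    refine h1.trans ?_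
    set F : ↥S → (ℕ → ℕ) := fun s =>
      enum (f s.2.choose s.2.choose_spec.2.choose) with hF
    have hsub : T ⊆ Set.range F := by
      rintro h ⟨a, haA, d, hdI, rfl⟩
      have hsS : usum a (f a d) ∈ S := ⟨a, haA, d, hdI, rfl⟩
      refine ⟨⟨usum a (f a d), hsS⟩, ?_⟩
      have hspec := hsS.choose_spec
      obtain ⟨ha'A, hd'⟩ := hspec
      have hd'spec := hd'.choose_spec
      obtain ⟨hd'I, heq⟩ := hd'spec
      have : f hsS.choose hd'.choose = f a d := (usum_right heq).symm
      simp only [hF]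
      rw [this]
    calc #T ≤ #(Set.range F) := Cardinal.mk_le_mk_of_subset hsub
      _ ≤ #↥S := Cardinal.mk_range_le
  · -- unboundedness
    rintro Y hYS ⟨b, hbinf, hbd⟩
    set ga : ↥Y → Set ℕ := fun y => (hYS y.2).choose with hga
    have spec1 : ∀ y : ↥Y, ga y ∈ A := fun y => (hYS y.2).choose_spec.1
    set gd : ↥Y → Set ℕ := fun y => (hYS y.2).choose_spec.2.choose with hgd
    have spec2 : ∀ y : ↥Y, gd y ∈ I (ga y) :=
      fun y => (hYS y.2).choose_spec.2.choose_spec.1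
    have spec3 : ∀ y : ↥Y, y.1 = usum (ga y) (f (ga y) (gd y)) :=
      fun y => (hYS y.2).choose_spec.2.choose_spec.2
    set B : Set (Set ℕ) := Set.range ga with hB
    have hBA : B ⊆ A := by rintro a ⟨y, rfl⟩; exact spec1 y
    -- build the bound b'
    have hgmono : StrictMono (fun n => enum b (2 * n)) :=
      fun m n h => Nat.nth_strictMono hbinf (by omega)
    set b' : Set ℕ := Set.range (fun n => enum b (2 * n)) with hb'
    have hb'inf : b'.Infinite := Set.infinite_range_of_injective hgmono.injective
    have hb'enum : ∀ n, enum b' n = enum b (2 * n) := fun n => nth_range hgmono n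
    have hBbound : ∀ a ∈ B, ∀ n, enum a n ≤ enum b' n := by
      rintro a ⟨y, rfl⟩ n
      have hinf := hA _ (spec1 y)
      have hx := hf _ (spec1 y) _ (spec2 y)
      have hkey : 2 * enum (ga y) n ≤ enum (usum (ga y) (f (ga y) (gd y))) (2 * n) :=
        key_lemma hinf hx.1 hx.2.1 n
      rw [← spec3 y] at hkey
      have hby : enum y.1 (2 * n) ≤ enum b (2 * n) := hbd y.1 y.2 (2 * n)
      rw [hb'enum n]
      omega
    have hBκ : #B < κ := hAunb B hBA ⟨b', hb'inf, hBbound⟩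
    have hU : #(⋃ a ∈ B, I a) < dNum := hIsmall B hBA hBκ
    set U := ⋃ a ∈ B, I a with hU'
    have hφinj : Function.Injective
        (fun y : ↥Y => ((⟨ga y, ⟨y, rfl⟩⟩ : ↥B),
          (⟨gd y, by simp only [hU', Set.mem_iUnion]; exact ⟨ga y, ⟨y, rfl⟩, spec2 y⟩⟩ : ↥U))) := by
      intro y1 y2 h
      simp only [Prod.mk.injEq, Subtype.mk.injEq] at h
      apply Subtype.ext
      rw [spec3 y1, spec3 y2, Subtype.mk.inj h.1, h.2]
    have hle : #↥Y ≤ #↥B * #↥U := by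
      have := Cardinal.mk_le_of_injective hφinj
      rwa [Cardinal.mk_prod, Cardinal.lift_id, Cardinal.lift_id] at this
    exact hle.trans_lt (Cardinal.mul_lt_of_lt aleph0_le_dNum (hBκ.trans_le hκd) hU)
end

section
/- For every semifilter S on ℕ there exists an S-scale: a set X ⊆ [ℕ]^∞ of cardinality 𝔟(S) such that for every b ∈ [ℕ]^∞ there is c ∈ [ℕ]^∞ with b ≤_{S⁺} c ≤_S x for all but fewer than 𝔟(S) elements x ∈ X. -/
open Set Cardinal Filter

/-- A semifilter: a nonempty family of infinite subsets of ℕ closed under almost-supersets. -/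
def IsSemifilter (S : Set (Set ℕ)) : Prop :=
  S.Nonempty ∧ (∀ s ∈ S, s.Infinite) ∧
    ∀ s ∈ S, ∀ b : Set ℕ, b.Infinite → (s \ b).Finite → b ∈ S

/-- \`a ≤_S b\`: the set \`[a ≤ b]\` of agreement of the enumerations belongs to \`S\`. -/
def leS (S : Set (Set ℕ)) (a b : Set ℕ) : Prop := {n | enum a n ≤ enum b n} ∈ S

/-- \`S⁺\`, the dual semifilter. -/
def splus (S : Set (Set ℕ)) : Set (Set ℕ) := {a | a.Infinite ∧ aᶜ ∉ S}

/-- \`𝔟(S)\`: the least cardinality of a \`≤_S\`-unbounded family in \`[ℕ]^∞\`. -/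
noncomputable def bofS (S : Set (Set ℕ)) : Cardinal :=
  sInf { c | ∃ X : Set (Set ℕ), (∀ x ∈ X, x.Infinite) ∧
    (¬ ∃ b : Set ℕ, b.Infinite ∧ ∀ x ∈ X, leS S x b) ∧ c = #X }

/-- An \`S\`-scale. -/
def IsScale (S X : Set (Set ℕ)) : Prop :=
  (∀ x ∈ X, x.Infinite) ∧ bofS S ≤ #X ∧
  ∀ b : Set ℕ, b.Infinite → ∃ c : Set ℕ, c.Infinite ∧ leS (splus S) b c ∧
    #{x ∈ X | ¬ leS S c x} < bofS S

/-- A cofinal \`S\`-scale. -/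
def IsCofinalScale (S X : Set (Set ℕ)) : Prop :=
  (∀ x ∈ X, x.Infinite) ∧ bofS S ≤ #X ∧
  ∀ b : Set ℕ, b.Infinite → #{x ∈ X | ¬ leS S b x} < bofS S

/-- A filter: a semifilter closed under finite intersections. -/
def IsSetFilter (F : Set (Set ℕ)) : Prop :=
  IsSemifilter F ∧ ∀ a ∈ F, ∀ b ∈ F, a ∩ b ∈ F


section aux

open Set Cardinal

/-- enum of an infinite set is strictly monotone. -/
lemma enum_strictMono {a : Set ℕ} (ha : a.Infinite) : StrictMono (enum a) :=
  Nat.nth_strictMono (by simpa using ha)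

/-- enum of the range of a strictly monotone function is that function. -/
lemma enum_range {f : ℕ → ℕ} (hf : StrictMono f) : ∀ n, enum (Set.range f) n = f n := by
  classical
  intro n
  have hcount : Nat.count (· ∈ Set.range f) (f n) = n := by
    rw [Nat.count_eq_card_filter_range]
    have himg : {x ∈ Finset.range (f n) | x ∈ Set.range f} = (Finset.range n).image f := by
      ext k
      simp only [Finset.mem_filter, Finset.mem_range, Finset.mem_image, Set.mem_range]
      constructor
      · rintro ⟨hk, j, rfl⟩
        exact ⟨j, hf.lt_iff_lt.mp hk, rfl⟩
      · rintro ⟨j, hj, rfl⟩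
        exact ⟨hf hj, j, rfl⟩
    rw [himg, Finset.card_image_of_injective _ hf.injective, Finset.card_range]
  have := Nat.nth_count (p := (· ∈ Set.range f)) (n := f n) ⟨n, rfl⟩
  rw [hcount] at this
  simpa [enum] using this

lemma semifilter_superset {S : Set (Set ℕ)} (hS : IsSemifilter S) {s t : Set ℕ}
    (hs : s ∈ S) (hst : s ⊆ t) : t ∈ S := by
  refine hS.2.2 s hs t ((hS.2.1 s hs).mono hst) ?_
  rw [Set.diff_eq_empty.2 hst]
  exact Set.finite_empty

lemma semifilter_cofinite {S : Set (Set ℕ)} (hS : IsSemifilter S) {t : Set ℕ}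
    (ht : tᶜ.Finite) : t ∈ S := by
  obtain ⟨s₀, hs₀⟩ := hS.1
  refine hS.2.2 s₀ hs₀ t ?_ (ht.subset fun x hx => hx.2)
  have := ht.infinite_compl
  rwa [compl_compl] at this

/-- The defining family of cardinalities in `bofS`. -/
def TT (S : Set (Set ℕ)) : Set Cardinal :=
  { c | ∃ X : Set (Set ℕ), (∀ x ∈ X, x.Infinite) ∧
    (¬ ∃ b : Set ℕ, b.Infinite ∧ ∀ x ∈ X, leS S x b) ∧ c = #X }

lemma bofS_eq (S : Set (Set ℕ)) : bofS S = sInf (TT S) := rfl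

lemma TT_nonempty {S : Set (Set ℕ)} (hS : IsSemifilter S) : (TT S).Nonempty := by
  refine ⟨#{a : Set ℕ | a.Infinite}, {a : Set ℕ | a.Infinite}, fun x hx => hx, ?_, rfl⟩
  rintro ⟨c, hc, hall⟩
  set f : ℕ → ℕ := fun n => enum c n + 1 with hf
  have hfmono : StrictMono f := fun a b hab => by
    simpa [hf] using Nat.succ_lt_succ (enum_strictMono hc hab)
  have hxinf : (Set.range f).Infinite := Set.infinite_range_of_injective hfmono.injective
  have hmem := hall (Set.range f) hxinf
  have hempty : {n | enum (Set.range f) n ≤ enum c n} = (∅ : Set ℕ) := by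
    ext n
    simp only [Set.mem_setOf_eq, enum_range hfmono]
    simp [hf]
  rw [leS, hempty] at hmem
  exact Set.finite_empty.not_infinite (hS.2.1 _ hmem)

lemma aleph0_le_bofS {S : Set (Set ℕ)} (hS : IsSemifilter S) : ℵ₀ ≤ bofS S := by
  rw [bofS_eq]
  refine le_csInf (TT_nonempty hS) ?_
  rintro c ⟨X, hXinf, hXunb, rfl⟩
  by_contra h
  push_neg at h
  have hfin : X.Finite := Cardinal.lt_aleph0_iff_set_finite.mp h
  apply hXunb
  set f : ℕ → ℕ := fun n => n + ∑ y ∈ hfin.toFinset, enum y n with hf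
  have hfmono : StrictMono f := by
    intro a b hab
    have hsum : ∑ y ∈ hfin.toFinset, enum y a ≤ ∑ y ∈ hfin.toFinset, enum y b :=
      Finset.sum_le_sum fun y hy =>
        (enum_strictMono (hXinf y (hfin.mem_toFinset.mp hy))).monotone hab.le
    exact Nat.add_lt_add_of_lt_of_le hab hsum
  refine ⟨Set.range f, Set.infinite_range_of_injective hfmono.injective, ?_⟩
  intro y hy
  have huniv : {n | enum y n ≤ enum (Set.range f) n} = Set.univ := by
    ext n
    simp only [Set.mem_setOf_eq, Set.mem_univ, iff_true, enum_range hfmono]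
    simp only [hf]
    calc enum y n ≤ ∑ z ∈ hfin.toFinset, enum z n :=
          Finset.single_le_sum (f := fun z => enum z n) (fun z _ => Nat.zero_le _) (hfin.mem_toFinset.mpr hy)
      _ ≤ n + ∑ z ∈ hfin.toFinset, enum z n := Nat.le_add_left _ _
  rw [leS, huniv]
  exact semifilter_cofinite hS (by simp)

lemma bounded_of_card_lt {S : Set (Set ℕ)} (_hS : IsSemifilter S) {Y : Set (Set ℕ)}
    (hYinf : ∀ y ∈ Y, y.Infinite) (hY : #Y < bofS S) :
    ∃ u : Set ℕ, u.Infinite ∧ ∀ y ∈ Y, leS S y u := by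
  by_contra h
  have : #Y ∈ TT S := ⟨Y, hYinf, by simpa using h, rfl⟩
  exact absurd (csInf_le' this) (not_le.mpr (by rwa [bofS_eq] at hY))

end aux
theorem stmt11 (S : Set (Set ℕ)) (hS : IsSemifilter S) :
    ∃ X : Set (Set ℕ), IsScale S X ∧ #X = bofS S := by
  classical
  set κ := bofS S with hκ
  have hκinf : ℵ₀ ≤ κ := aleph0_le_bofS hS
  -- extract a minimal unbounded family B
  have hmem : κ ∈ TT S := by rw [hκ, bofS_eq]; exact csInf_mem (TT_nonempty hS)
  obtain ⟨B, hBinf, hBunb, hBcard⟩ := hmem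
  -- index type
  set ι := κ.ord.ToType with hι
  have hmkι : #ι = κ := by rw [hι, Cardinal.mk_toType, Cardinal.card_ord]
  have hBι : #B = #ι := by rw [hmkι, ← hBcard]
  obtain ⟨e⟩ : Nonempty (ι ≃ ↥B) := Cardinal.eq.mp hBι.symm
  set b : ι → Set ℕ := fun i => (e i : Set ℕ) with hb
  have hbinf : ∀ i, (b i).Infinite := fun i => hBinf _ (e i).2
  have hbsurj : ∀ y ∈ B, ∃ i, b i = y := fun y hy => ⟨e.symm ⟨y, hy⟩, by simp [hb]⟩
  -- initial segments are small
  have hIio : ∀ i : ι, #(Set.Iio i) < κ := fun i => Cardinal.mk_Iio_ord_toType i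
  have hIic : ∀ i : ι, #(Set.Iic i) < κ := by
    intro i
    have h1 : #(Set.Iic i) ≤ #(Set.Iio i) + 1 := by
      refine le_trans (Cardinal.mk_le_mk_of_subset (t := insert i (Set.Iio i)) ?_)
        Cardinal.mk_insert_le
      intro j hj
      rcases lt_or_eq_of_le (Set.mem_Iic.mp hj) with h | h
      · exact Set.mem_insert_iff.mpr (Or.inr h)
      · exact Set.mem_insert_iff.mpr (Or.inl h)
    rcases lt_or_ge (#(Set.Iio i)) ℵ₀ with h | h
    · exact h1.trans_lt (lt_of_lt_of_le (Cardinal.add_lt_aleph0 h Cardinal.one_lt_aleph0) hκinf)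
    · have := Cardinal.add_one_eq h
      rw [this] at h1
      exact h1.trans_lt (hIio i)
  -- choose bounds
  have hbound : ∀ i : ι, ∃ u : Set ℕ, u.Infinite ∧ ∀ y ∈ b '' Set.Iic i, leS S y u := by
    intro i
    refine bounded_of_card_lt hS ?_ (lt_of_le_of_lt Cardinal.mk_image_le (hIic i))
    rintro y ⟨j, _, rfl⟩
    exact hbinf j
  choose u huinf hubd using hbound
  -- the scale
  set f : ι → ℕ → ℕ := fun i n => max (enum (u i) n) (enum (b i) n) with hfdef
  have hfmono : ∀ i, StrictMono (f i) := fun i a c hac =>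
    max_lt_max (enum_strictMono (huinf i) hac) (enum_strictMono (hbinf i) hac)
  set x : ι → Set ℕ := fun i => Set.range (f i) with hx
  have hxinf : ∀ i, (x i).Infinite := fun i =>
    Set.infinite_range_of_injective (hfmono i).injective
  have hxenum : ∀ i n, enum (x i) n = f i n := fun i => enum_range (hfmono i)
  -- b j ≤_S x i  for  j ≤ i
  have hkey : ∀ i j : ι, j ≤ i → leS S (b j) (x i) := by
    intro i j hji
    have h1 : {n | enum (b j) n ≤ enum (u i) n} ∈ S := hubd i (b j) ⟨j, hji, rfl⟩
    refine semifilter_superset hS h1 ?_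
    intro n hn
    simp only [Set.mem_setOf_eq] at hn ⊢
    rw [hxenum]
    exact le_trans hn (le_max_left _ _)
  set X : Set (Set ℕ) := Set.range x with hX
  have hXinf : ∀ t ∈ X, t.Infinite := by rintro t ⟨i, rfl⟩; exact hxinf i
  -- X is unbounded
  have hXunb : ¬ ∃ c : Set ℕ, c.Infinite ∧ ∀ t ∈ X, leS S t c := by
    rintro ⟨c, hc, hall⟩
    apply hBunb
    refine ⟨c, hc, ?_⟩
    intro y hy
    obtain ⟨i, rfl⟩ := hbsurj y hy
    have h1 : {n | enum (x i) n ≤ enum c n} ∈ S := hall (x i) ⟨i, rfl⟩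
    refine semifilter_superset hS h1 ?_
    intro n hn
    simp only [Set.mem_setOf_eq] at hn ⊢
    refine le_trans ?_ hn
    rw [hxenum]
    exact le_max_right _ _
  -- cardinality
  have hXle : #X ≤ κ := le_of_le_of_eq Cardinal.mk_range_le hmkι
  have hXge : κ ≤ #X := by
    rw [hκ, bofS_eq]
    exact csInf_le' ⟨X, hXinf, hXunb, rfl⟩
  have hXcard : #X = κ := le_antisymm hXle hXge
  refine ⟨X, ⟨hXinf, hXge, ?_⟩, hXcard⟩
  -- the scale property
  intro binf hbinfi
  -- find i₀ with binf ≤_{S⁺} b i₀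
  have hex : ∃ i : ι, leS (splus S) binf (b i) := by
    by_contra hno
    push_neg at hno
    apply hBunb
    refine ⟨binf, hbinfi, ?_⟩
    intro y hy
    obtain ⟨i, rfl⟩ := hbsurj y hy
    set A := {n | enum binf n ≤ enum (b i) n} with hA
    have hAc : Aᶜ ∈ S := by
      have h1 : ¬ (A.Infinite ∧ Aᶜ ∉ S) := hno i
      rcases not_and_or.mp h1 with h | h
      · refine semifilter_cofinite hS ?_
        rw [compl_compl]
        exact Set.not_infinite.mp h
      · exact not_not.mp h
    refine semifilter_superset hS hAc ?_
    intro n hn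
    simp only [hA, Set.mem_compl_iff, Set.mem_setOf_eq, not_le] at hn
    exact le_of_lt hn
  obtain ⟨i₀, hi₀⟩ := hex
  refine ⟨b i₀, hbinf i₀, hi₀, ?_⟩
  -- exceptions
  have hsub : {t ∈ X | ¬ leS S (b i₀) t} ⊆ x '' Set.Iio i₀ := by
    rintro t ⟨⟨i, rfl⟩, hnt⟩
    rcases lt_or_ge i i₀ with h | h
    · exact ⟨i, h, rfl⟩
    · exact absurd (hkey i i₀ h) hnt
  calc #{t ∈ X | ¬ leS S (b i₀) t} ≤ #(x '' Set.Iio i₀) := Cardinal.mk_le_mk_of_subset hsub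
    _ ≤ #(Set.Iio i₀) := Cardinal.mk_image_le
    _ < κ := hIio i₀
end
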